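/- Every \alpha \in \Delta_0^+ satisfies exactly one of the following four conditions: (a) \alpha \in \Delta_0'^+, i.e. the coordinates of \alpha at 0, 1, and 5 all vanish; (b) \alpha + \sigma(\alpha) + \sigma^2(\alpha) \in \mathbb{Z}_{>0}\cdot\delta; (c) there exists \beta \in \Delta_0' with \sigma(\beta) \ne \beta such that \alpha + \sigma(\alpha) + \sigma^2(\alpha) = \delta + \beta + \sigma(\beta) + \sigma^2(\beta); (d) there exists \beta \in \Delta_0' with \sigma(\beta) \ne \beta such that \alpha + \sigma(\alpha) + \sigma^2(\alpha) = 2\delta + \beta + \sigma(\beta) + \sigma^2(\beta). -/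
import Mathlib


/-!
Statement 8: For the affine root system of type `E_6^{(1)}` with the admissible
order-3 diagram automorphism `σ` (`α_0 → α_5 → α_1 → α_0`, `α_6 → α_4 → α_2 → α_6`,
`α_3 → α_3`), every `α ∈ Δ₀⁺` satisfies exactly one of:
(a) `α ∈ Δ₀'⁺` (coordinates at `0`, `1`, `5` vanish);
(b) `α + σ(α) + σ²(α) ∈ ℤ_{>0}·δ`;
(c) `∃ β ∈ Δ₀'` with `σ(β) ≠ β` and `α + σ(α) + σ²(α) = δ + β + σ(β) + σ²(β)`;
(d) `∃ β ∈ Δ₀'` with `σ(β) ≠ β` and `α + σ(α) + σ²(α) = 2δ + β + σ(β) + σ²(β)`.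
-/

namespace Stmt8

/-- The root lattice `Q = ⨁_{i ∈ I} ℤ α_i` for `I = {0,1,…,6}`. -/
abbrev Q := Fin 7 → ℤ

/-- The edges of the Dynkin diagram of affine type `E_6^{(1)}`. -/
abbrev epair (i j : ℕ) : Prop :=
  (i = 1 ∧ j = 2) ∨ (i = 2 ∧ j = 3) ∨ (i = 3 ∧ j = 4) ∨ (i = 4 ∧ j = 5) ∨
  (i = 3 ∧ j = 6) ∨ (i = 0 ∧ j = 6)

abbrev edge (i j : ℕ) : Prop := epair i j ∨ epair j i

/-- The generalized Cartan matrix of type `E_6^{(1)}`. -/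
def CM (i j : Fin 7) : ℤ :=
  if i = j then 2 else if edge (i : ℕ) (j : ℕ) then -1 else 0

/-- The symmetric bilinear form `B` on `Q` determined by the Cartan matrix. -/
def B (v w : Q) : ℤ := ∑ i, ∑ j, v i * CM i j * w j

/-- The set of positive real roots. -/
def ΔrePos : Set Q := {v | (∀ i, 0 ≤ v i) ∧ B v v = 2}

/-- The set `Δ₀⁺` of positive roots of the finite root system of type `E_6`. -/
def Δ0Pos : Set Q := {v | v ∈ ΔrePos ∧ v 0 = 0}

/-- The primitive null root `δ`. -/
def δ : Q := ![1, 1, 2, 3, 2, 1, 2]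

/-- The admissible order-3 diagram automorphism `σ` (on coordinates,
`(σ v)_j = v_{p⁻¹(j)}`). -/
def σmap (v : Q) : Q := fun j => v (![1, 5, 4, 3, 6, 0, 2] j)

/-- The orbit sum `α + σ(α) + σ²(α)`. -/
def Osum (α : Q) : Q := α + σmap α + σmap (σmap α)

/-- The `σ`-stable subsystem `Δ₀'` of type `D_4` supported on `{2,3,4,6}`. -/
def Δ0' : Set Q := {v | B v v = 2 ∧ v 0 = 0 ∧ v 1 = 0 ∧ v 5 = 0}

/-- The positive part `Δ₀'⁺ = Δ₀' ∩ ℕ^I`. -/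
def Δ0'Pos : Set Q := {v | v ∈ Δ0' ∧ ∀ i, 0 ≤ v i}



lemma Bexpand (v : Q) : B v v =
    2*(v 0)^2 + 2*(v 1)^2 + 2*(v 2)^2 + 2*(v 3)^2 + 2*(v 4)^2 + 2*(v 5)^2 + 2*(v 6)^2
      - 2*(v 1 * v 2 + v 2 * v 3 + v 3 * v 4 + v 4 * v 5 + v 3 * v 6 + v 0 * v 6) := by
  simp only [B, CM, Fin.sum_univ_seven,
    show ((0:Fin 7):ℕ) = 0 from rfl, show ((1:Fin 7):ℕ) = 1 from rfl,
    show ((2:Fin 7):ℕ) = 2 from rfl, show ((3:Fin 7):ℕ) = 3 from rfl,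
    show ((4:Fin 7):ℕ) = 4 from rfl, show ((5:Fin 7):ℕ) = 5 from rfl,
    show ((6:Fin 7):ℕ) = 6 from rfl]
  norm_num [edge, epair]
  simp (config := { decide := true })
  ring

def bList : List Q :=
  [![0,0,-1,-1,-1,0,0], ![0,0,-1,-1,0,0,0], ![0,0,-1,0,0,0,0],
   ![0,0,0,0,0,0,1], ![0,0,0,1,0,0,1], ![0,0,0,1,1,0,1]]

def Csur (α : Q) : Prop :=
  (α 1 = 0 ∧ α 5 = 0) ∨
  (0 < α 1 + α 5 ∧ Osum α = (α 1 + α 5) • δ) ∨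
  (∃ β ∈ bList, (B β β = 2 ∧ β 0 = 0 ∧ β 1 = 0 ∧ β 5 = 0) ∧ σmap β ≠ β ∧
      Osum α = δ + Osum β) ∨
  (∃ β ∈ bList, (B β β = 2 ∧ β 0 = 0 ∧ β 1 = 0 ∧ β 5 = 0) ∧ σmap β ≠ β ∧
      Osum α = 2 • δ + Osum β)

instance (α : Q) : Decidable (Csur α) := by unfold Csur; infer_instance

def g (x : Fin 2 × Fin 3 × Fin 4 × Fin 3 × Fin 2 × Fin 3) : Q :=
  ![0, (x.1 : ℤ), (x.2.1 : ℤ), (x.2.2.1 : ℤ), (x.2.2.2.1 : ℤ), (x.2.2.2.2.1 : ℤ),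
    (x.2.2.2.2.2 : ℤ)]

set_option maxRecDepth 100000 in
theorem key : ∀ x, B (g x) (g x) = 2 → Csur (g x) := by decide

set_option maxHeartbeats 1000000 in
lemma bounds (α : Q) (hn : ∀ i, 0 ≤ α i) (h0 : α 0 = 0) (hB : B α α = 2) :
    α 1 ≤ 1 ∧ α 2 ≤ 2 ∧ α 3 ≤ 3 ∧ α 4 ≤ 2 ∧ α 5 ≤ 1 ∧ α 6 ≤ 2 := by
  have hq0 := Bexpand α
  rw [hB] at hq0
  have h1 := hn 1; have h2 := hn 2; have h3 := hn 3
  have h4 := hn 4; have h5 := hn 5; have h6 := hn 6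
  set a := α 1; set b := α 2; set c := α 3; set d := α 4; set e := α 5; set f := α 6
  have hq : 2*a^2+2*b^2+2*c^2+2*d^2+2*e^2+2*f^2 - 2*(a*b+b*c+c*d+d*e+c*f) = 2 := by
    linear_combination -hq0 - (2 * α 0 - 2 * f) * h0
  clear hq0 hB h0
  refine ⟨?_, ?_, ?_, ?_, ?_, ?_⟩
  · nlinarith [sq_nonneg (2*b-c-a), sq_nonneg (3*c-2*d-2*f-a), sq_nonneg (4*d-3*e-2*f-a),
      sq_nonneg (5*e-2*f-a), sq_nonneg (4*f-3*a)]
  · nlinarith [sq_nonneg (2*a-b), sq_nonneg (2*c-d-f-b), sq_nonneg (3*d-2*e-f-b),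
      sq_nonneg (4*e-f-b), sq_nonneg (5*f-3*b)]
  · nlinarith [sq_nonneg (2*a-b), sq_nonneg (3*b-2*c), sq_nonneg (2*d-e-c),
      sq_nonneg (3*e-c), sq_nonneg (2*f-c)]
  · nlinarith [sq_nonneg (2*a-b), sq_nonneg (3*b-2*c), sq_nonneg (4*c-3*f-3*d),
      sq_nonneg (2*e-d), sq_nonneg (5*f-3*d)]
  · nlinarith [sq_nonneg (2*a-b), sq_nonneg (3*b-2*c), sq_nonneg (4*c-3*d-3*f),
      sq_nonneg (5*d-3*f-4*e), sq_nonneg (4*f-3*e)]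
  · nlinarith [sq_nonneg (2*a-b), sq_nonneg (3*b-2*c), sq_nonneg (4*c-3*d-3*f),
      sq_nonneg (5*d-4*e-3*f), sq_nonneg (2*e-f)]

lemma osum0 (v : Q) : Osum v 0 = v 0 + v 1 + v 5 := rfl
lemma osum2 (v : Q) : Osum v 2 = v 2 + v 4 + v 6 := rfl
lemma osum3 (v : Q) : Osum v 3 = v 3 + v 3 + v 3 := rfl

lemma noOsumZero (β : Q) (hβ : β ∈ Δ0') (hz : Osum β = 0) : False := by
  obtain ⟨hB, h0, h1, h5⟩ := hβ
  have e3 : β 3 + β 3 + β 3 = 0 := by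
    have := congrFun hz 3; rwa [osum3] at this
  have h3 : β 3 = 0 := by omega
  have e2 : β 2 + β 4 + β 6 = 0 := by
    have := congrFun hz 2; rwa [osum2] at this
  have hq0 := Bexpand β
  rw [hB, h0, h1, h3, h5] at hq0
  norm_num at hq0
  have hsq : β 2 ^ 2 + β 4 ^ 2 + β 6 ^ 2 = 1 := by linarith
  have hp : β 2 ^ 2 + β 4 ^ 2 + β 6 ^ 2
      + 2 * (β 2 * β 4 + β 4 * β 6 + β 2 * β 6) = 0 := by
    linear_combination (β 2 + β 4 + β 6) * e2
  set p := β 2 * β 4 + β 4 * β 6 + β 2 * β 6 with hpdef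
  omega

theorem statement8 : ∀ α ∈ Δ0Pos,
    ((α ∈ Δ0'Pos) ∨
      (∃ m : ℤ, 0 < m ∧ Osum α = m • δ) ∨
      (∃ β ∈ Δ0', σmap β ≠ β ∧ Osum α = δ + Osum β) ∨
      (∃ β ∈ Δ0', σmap β ≠ β ∧ Osum α = 2 • δ + Osum β)) ∧
    ¬((α ∈ Δ0'Pos) ∧ (∃ m : ℤ, 0 < m ∧ Osum α = m • δ)) ∧
    ¬((α ∈ Δ0'Pos) ∧ (∃ β ∈ Δ0', σmap β ≠ β ∧ Osum α = δ + Osum β)) ∧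
    ¬((α ∈ Δ0'Pos) ∧ (∃ β ∈ Δ0', σmap β ≠ β ∧ Osum α = 2 • δ + Osum β)) ∧
    ¬((∃ m : ℤ, 0 < m ∧ Osum α = m • δ) ∧
      (∃ β ∈ Δ0', σmap β ≠ β ∧ Osum α = δ + Osum β)) ∧
    ¬((∃ m : ℤ, 0 < m ∧ Osum α = m • δ) ∧
      (∃ β ∈ Δ0', σmap β ≠ β ∧ Osum α = 2 • δ + Osum β)) ∧
    ¬((∃ β ∈ Δ0', σmap β ≠ β ∧ Osum α = δ + Osum β) ∧
      (∃ β ∈ Δ0', σmap β ≠ β ∧ Osum α = 2 • δ + Osum β)) := by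
  intro α hα
  obtain ⟨⟨hn, hB⟩, h0⟩ := hα
  obtain ⟨b1, b2, b3, b4, b5, b6⟩ := bounds α hn h0 hB
  have hn1 := hn 1; have hn2 := hn 2; have hn3 := hn 3
  have hn4 := hn 4; have hn5 := hn 5; have hn6 := hn 6
  have hC : Csur α := by
    obtain ⟨x, hg⟩ : ∃ x, g x = α := by
      refine ⟨(⟨(α 1).toNat, by omega⟩, ⟨(α 2).toNat, by omega⟩, ⟨(α 3).toNat, by omega⟩,
        ⟨(α 4).toNat, by omega⟩, ⟨(α 5).toNat, by omega⟩, ⟨(α 6).toNat, by omega⟩), ?_⟩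
      funext i
      fin_cases i
      · show (0:ℤ) = α 0; omega
      · show ((α 1).toNat : ℤ) = α 1; omega
      · show ((α 2).toNat : ℤ) = α 2; omega
      · show ((α 3).toNat : ℤ) = α 3; omega
      · show ((α 4).toNat : ℤ) = α 4; omega
      · show ((α 5).toNat : ℤ) = α 5; omega
      · show ((α 6).toNat : ℤ) = α 6; omega
    have := key x (by rw [hg]; exact hB)
    rwa [hg] at this
  refine ⟨?_, ?_, ?_, ?_, ?_, ?_, ?_⟩
  · rcases hC with ⟨h1, h5⟩ | ⟨hm, he⟩ | ⟨β, _, hβ, hσ, he⟩ | ⟨β, _, hβ, hσ, he⟩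
    · exact Or.inl ⟨⟨hB, h0, h1, h5⟩, hn⟩
    · exact Or.inr (Or.inl ⟨α 1 + α 5, hm, he⟩)
    · exact Or.inr (Or.inr (Or.inl ⟨β, hβ, hσ, he⟩))
    · exact Or.inr (Or.inr (Or.inr ⟨β, hβ, hσ, he⟩))
  · -- ¬(a ∧ b)
    rintro ⟨⟨⟨-, -, h1, h5⟩, -⟩, m, hm, he⟩
    have hco := congrFun he 0
    rw [osum0] at hco
    simp only [Pi.smul_apply, δ, smul_eq_mul, Matrix.cons_val_zero] at hco
    omega
  · -- ¬(a ∧ c)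
    rintro ⟨⟨⟨-, -, h1, h5⟩, -⟩, β, ⟨-, hb0, hb1, hb5⟩, -, he⟩
    have hco := congrFun he 0
    rw [osum0] at hco
    simp only [Pi.add_apply, δ, osum0, Matrix.cons_val_zero] at hco
    omega
  · -- ¬(a ∧ d)
    rintro ⟨⟨⟨-, -, h1, h5⟩, -⟩, β, ⟨-, hb0, hb1, hb5⟩, -, he⟩
    have hco := congrFun he 0
    rw [osum0] at hco
    simp only [Pi.add_apply, Pi.smul_apply, δ, osum0, smul_eq_mul, nsmul_eq_mul,
      Nat.cast_ofNat, Pi.mul_apply, Pi.ofNat_apply, Matrix.cons_val_zero] at hco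
    omega
  · -- ¬(b ∧ c)
    rintro ⟨⟨m, hm, he1⟩, β, hβ, -, he2⟩
    obtain ⟨-, hb0, hb1, hb5⟩ := id hβ
    have hco := congrFun he1 0
    have hco2 := congrFun he2 0
    rw [osum0] at hco hco2
    simp only [Pi.smul_apply, Pi.add_apply, δ, smul_eq_mul, osum0,
      Matrix.cons_val_zero] at hco hco2
    have hm1 : m = 1 := by omega
    subst hm1
    refine noOsumZero β hβ ?_
    funext i
    have e1 := congrFun he1 i
    have e2 := congrFun he2 i
    simp only [Pi.smul_apply, Pi.add_apply, smul_eq_mul, one_mul] at e1 e2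
    simp only [Pi.zero_apply]
    omega
  · -- ¬(b ∧ d)
    rintro ⟨⟨m, hm, he1⟩, β, hβ, -, he2⟩
    obtain ⟨-, hb0, hb1, hb5⟩ := id hβ
    have hco := congrFun he1 0
    have hco2 := congrFun he2 0
    rw [osum0] at hco hco2
    simp only [Pi.smul_apply, Pi.add_apply, δ, smul_eq_mul, osum0, nsmul_eq_mul,
      Nat.cast_ofNat, Pi.mul_apply, Pi.ofNat_apply, Matrix.cons_val_zero] at hco hco2
    have hm1 : m = 2 := by omega
    subst hm1
    refine noOsumZero β hβ ?_
    funext i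
    have e1 := congrFun he1 i
    have e2 := congrFun he2 i
    simp only [Pi.smul_apply, Pi.add_apply, smul_eq_mul, nsmul_eq_mul,
      Nat.cast_ofNat, Pi.mul_apply, Pi.ofNat_apply] at e1 e2
    simp only [Pi.zero_apply]
    omega
  · -- ¬(c ∧ d)
    rintro ⟨⟨β, ⟨-, hb0, hb1, hb5⟩, -, he1⟩, γ, ⟨-, hc0, hc1, hc5⟩, -, he2⟩
    have e1 := congrFun he1 0
    have e2 := congrFun he2 0
    rw [osum0] at e1 e2
    simp only [Pi.add_apply, Pi.smul_apply, δ, smul_eq_mul, osum0, nsmul_eq_mul,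
      Nat.cast_ofNat, Pi.mul_apply, Pi.ofNat_apply, Matrix.cons_val_zero] at e1 e2
    omega


end Stmt8
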